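/- Let (x, x₁) be a Mannheim D-pair of type 1 in Minkowski 3-space with g = n₁ at corresponding points, T₁ = cosh θ·T - sinh θ·n, g₁ = -sinh θ·T + cosh θ·n. Then differentiating the orthogonality ⟨n, n₁⟩ = 0 with respect to s₁ gives τ_g·(ds/ds₁) = -k_{n₁}·sinh θ + τ_{g₁}·cosh θ. -/
import Mathlib


noncomputable section

open Real

/-- Minkowski inner product on ℝ³: ⟨u,v⟩ = -u₁v₁ + u₂v₂ + u₃v₃. -/
def mink (u v : Fin 3 → ℝ) : ℝ := -(u 0 * v 0) + u 1 * v 1 + u 2 * v 2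

/-- Lorentzian cross product on Minkowski 3-space. -/
def lcross (u v : Fin 3 → ℝ) : Fin 3 → ℝ :=
  ![u 1 * v 2 - u 2 * v 1, u 0 * v 2 - u 2 * v 0, u 1 * v 0 - u 0 * v 1]

/-- Theorem 4.3 (ii): differentiating ⟨n,n₁⟩ = 0 gives
τ_g·(ds/ds₁) = -k_{n₁}·sinh θ + τ_{g₁}·cosh θ.  Everything is a function of s₁. -/
theorem mannheim_type1_tg_relation
    (T T₁ g g₁ n n₁ : ℝ → Fin 3 → ℝ)
    (kg kn τg kg₁ kn₁ τg₁ σ θ : ℝ → ℝ)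
    (hT₁ : ∀ s, T₁ s = Real.cosh (θ s) • T s - Real.sinh (θ s) • n s)
    (hg₁ : ∀ s, g₁ s = (-Real.sinh (θ s)) • T s + Real.cosh (θ s) • n s)
    (hgn₁ : ∀ s, g s = n₁ s)
    (hnn₁ : ∀ s, mink (n s) (n₁ s) = 0)
    (hnd : ∀ s, HasDerivAt n (σ s • (kn s • T s + τg s • g s)) s)
    (hn₁d : ∀ s, HasDerivAt n₁ (kn₁ s • T₁ s + τg₁ s • g₁ s) s)
    (h1 : ∀ s, mink (T s) (T s) = 1) (h2 : ∀ s, mink (g s) (g s) = 1)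
    (h3 : ∀ s, mink (n s) (n s) = -1)
    (h4 : ∀ s, mink (T s) (g s) = 0) (h5 : ∀ s, mink (T s) (n s) = 0)
    (h6 : ∀ s, mink (g s) (n s) = 0)
    (h7 : ∀ s, mink (T₁ s) (T₁ s) = 1) (h8 : ∀ s, mink (g₁ s) (g₁ s) = -1)
    (h9 : ∀ s, mink (n₁ s) (n₁ s) = 1)
    (h10 : ∀ s, mink (T₁ s) (g₁ s) = 0) (h11 : ∀ s, mink (T₁ s) (n₁ s) = 0)
    (h12 : ∀ s, mink (g₁ s) (n₁ s) = 0) :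
    ∀ s, τg s * σ s = -(kn₁ s) * Real.sinh (θ s) + τg₁ s * Real.cosh (θ s) := by
  intro s
  have hn := hasDerivAt_pi.mp (hnd s)
  have hm := hasDerivAt_pi.mp (hn₁d s)
  have hF : HasDerivAt (fun t => mink (n t) (n₁ t))
      (-(((σ s • (kn s • T s + τg s • g s)) 0) * n₁ s 0
          + n s 0 * ((kn₁ s • T₁ s + τg₁ s • g₁ s) 0)
        ) + (((σ s • (kn s • T s + τg s • g s)) 1) * n₁ s 1
          + n s 1 * ((kn₁ s • T₁ s + τg₁ s • g₁ s) 1))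
        + (((σ s • (kn s • T s + τg s • g s)) 2) * n₁ s 2
          + n s 2 * ((kn₁ s • T₁ s + τg₁ s • g₁ s) 2)) ) s := by
    unfold mink
    exact (((hn 0).mul (hm 0)).neg.add ((hn 1).mul (hm 1))).add ((hn 2).mul (hm 2))
  have h0 : HasDerivAt (fun t => mink (n t) (n₁ t)) 0 s := by
    have : (fun t => mink (n t) (n₁ t)) = fun _ => (0:ℝ) := funext hnn₁
    rw [this]; exact hasDerivAt_const s 0
  have hD := h0.unique hF
  have h2' := h2 s; have h3' := h3 s; have h4' := h4 s; have h5' := h5 s; have h6' := h6 s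
  unfold mink at h2' h3' h4' h5' h6'
  rw [hT₁ s, hg₁ s, ← hgn₁ s] at hD
  simp only [Pi.smul_apply, Pi.add_apply, Pi.sub_apply, smul_eq_mul] at hD
  linear_combination -hD - (σ s * kn s) * h4' - (σ s * τg s) * h2'
    - (kn₁ s * Real.cosh (θ s) - τg₁ s * Real.sinh (θ s)) * h5'
    + (kn₁ s * Real.sinh (θ s) - τg₁ s * Real.cosh (θ s)) * h3'
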